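/- For a torus of revolution in ℝ³ obtained by rotating a circle of radius r around an axis at distance R > r from its center, the Willmore energy equals π² R² / (r √(R² − r²)), and this quantity is minimized over all R > r > 0 exactly when R/r = √2, with minimal value 2π². -/

import Mathlib

open Real intervalIntegral

lemma inv_cos_integral (a b : ℝ) (hb : 0 < b) (hab : b < a) :
    ∫ θ in (0:ℝ)..(2*Real.pi), 1/(a + b*Real.cos θ)
      = 2*Real.pi/Real.sqrt (a^2 - b^2) := by
  set s := Real.sqrt (a^2 - b^2) with hs_def
  have hs2 : s^2 = a^2 - b^2 := Real.sq_sqrt (by nlinarith)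
  have hs : 0 < s := Real.sqrt_pos.2 (by nlinarith)
  have hsa : s < a := by nlinarith
  have hD : ∀ θ : ℝ, 0 < a + s + b*Real.cos θ := fun θ => by
    nlinarith [Real.neg_one_le_cos θ]
  have hden : ∀ θ : ℝ, 0 < a + b*Real.cos θ := fun θ => by
    nlinarith [Real.neg_one_le_cos θ]
  set F : ℝ → ℝ := fun θ => (θ - 2 * Real.arctan (b*Real.sin θ/(a+s+b*Real.cos θ)))/s with hF_def
  have hF : ∀ θ : ℝ, HasDerivAt F (1/(a + b*Real.cos θ)) θ := by
    intro θ
    have h1 : HasDerivAt (fun θ : ℝ => b*Real.sin θ) (b*Real.cos θ) θ :=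
      (Real.hasDerivAt_sin θ).const_mul b
    have h2 : HasDerivAt (fun θ : ℝ => a+s+b*Real.cos θ) (b*(-Real.sin θ)) θ :=
      ((Real.hasDerivAt_cos θ).const_mul b).const_add (a+s)
    have h3 := h1.div h2 (ne_of_gt (hD θ))
    have h4 := (Real.hasDerivAt_arctan (b*Real.sin θ/(a+s+b*Real.cos θ))).comp θ h3
    have h5 := ((hasDerivAt_id θ).sub (h4.const_mul 2)).div_const s
    refine h5.congr_deriv ?_
    symm
    have hsc := Real.sin_sq_add_cos_sq θ
    have hDθ := (hD θ).ne'
    have hdθ := (hden θ).ne'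
    have h1s : (0:ℝ) < 1 + (b*Real.sin θ/(a+s+b*Real.cos θ))^2 := by positivity
    have h1s' : (1 + (b*Real.sin θ/(a+s+b*Real.cos θ))^2) ≠ 0 := by positivity
    field_simp
    linear_combination (a+s+b*Real.cos θ) * (b^2*hsc + hs2)
  have hcont : Continuous fun θ : ℝ => 1/(a + b*Real.cos θ) := by
    apply Continuous.div continuous_const (by continuity)
    intro θ; exact (hden θ).ne'
  have := intervalIntegral.integral_eq_sub_of_hasDerivAt
    (fun θ _ => hF θ) (hcont.intervalIntegrable 0 (2*Real.pi))
  rw [this]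
  simp [hF_def, Real.sin_two_pi, Real.cos_two_pi]

/-- For the torus of revolution of radii `R > r > 0` in `ℝ³`, the Willmore energy
`W = ∫₀^{2π}∫₀^{2π} H² r(R + r cos θ) dθ dφ`, with
`H = (R + 2r cos θ)/(2r(R + r cos θ))`, equals `π² R² / (r √(R² − r²))`; this quantity
is always `≥ 2π²`, with equality exactly when `R = √2 r`. -/
theorem stmt_3 (R r : ℝ) (hr : 0 < r) (hRr : r < R) :
    (∫ φ in (0:ℝ)..(2 * Real.pi), ∫ θ in (0:ℝ)..(2 * Real.pi),
        ((R + 2 * r * Real.cos θ) / (2 * r * (R + r * Real.cos θ))) ^ 2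
          * (r * (R + r * Real.cos θ)))
      = Real.pi ^ 2 * R ^ 2 / (r * Real.sqrt (R ^ 2 - r ^ 2))
    ∧ 2 * Real.pi ^ 2 ≤ Real.pi ^ 2 * R ^ 2 / (r * Real.sqrt (R ^ 2 - r ^ 2))
    ∧ (Real.pi ^ 2 * R ^ 2 / (r * Real.sqrt (R ^ 2 - r ^ 2)) = 2 * Real.pi ^ 2
        ↔ R = Real.sqrt 2 * r) := by
  have hR : 0 < R := lt_trans hr hRr
  set s := Real.sqrt (R^2 - r^2) with hs_def
  have hs2 : s^2 = R^2 - r^2 := Real.sq_sqrt (by nlinarith)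
  have hs : 0 < s := Real.sqrt_pos.2 (by nlinarith)
  have hden : ∀ θ : ℝ, 0 < R + r*Real.cos θ := fun θ => by
    nlinarith [Real.neg_one_le_cos θ]
  -- inner integral
  have hinner : (∫ θ in (0:ℝ)..(2 * Real.pi),
      ((R + 2 * r * Real.cos θ) / (2 * r * (R + r * Real.cos θ))) ^ 2
        * (r * (R + r * Real.cos θ)))
      = Real.pi * R^2 / (2 * r * s) := by
    have hfe : ∀ θ : ℝ, ((R + 2 * r * Real.cos θ) / (2 * r * (R + r * Real.cos θ))) ^ 2
        * (r * (R + r * Real.cos θ))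
        = Real.cos θ + (R^2/(4*r)) * (1/(R + r*Real.cos θ)) := by
      intro θ
      have h := (hden θ).ne'
      field_simp
      ring
    rw [intervalIntegral.integral_congr (g := fun θ =>
        Real.cos θ + (R^2/(4*r)) * (1/(R + r*Real.cos θ))) (fun θ _ => hfe θ)]
    have hc1 : Continuous fun θ : ℝ => (R^2/(4*r)) * (1/(R + r*Real.cos θ)) := by
      apply Continuous.mul continuous_const
      exact Continuous.div continuous_const (by continuity) (fun θ => (hden θ).ne')
    rw [intervalIntegral.integral_add (Real.continuous_cos.intervalIntegrable 0 (2*Real.pi))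
        (hc1.intervalIntegrable 0 (2*Real.pi)),
      integral_cos, integral_const_mul,
      inv_cos_integral R r hr hRr, ← hs_def]
    simp [Real.sin_two_pi]
    field_simp
    ring
  rw [intervalIntegral.integral_congr (g := fun _ : ℝ => Real.pi * R^2 / (2 * r * s))
      (fun φ _ => hinner), intervalIntegral.integral_const]
  have hval : (2 * Real.pi - 0) • (Real.pi * R^2 / (2 * r * s))
      = Real.pi ^ 2 * R ^ 2 / (r * s) := by
    rw [smul_eq_mul]; field_simp; ring
  refine ⟨hval, ?_, ?_⟩
  · -- inequality
    have hkey : 0 ≤ R^2 - 2*r*s := by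
      have h1 : (R^2 - 2*r*s) * (R^2 + 2*r*s) = (R^2 - 2*r^2)^2 := by
        linear_combination (-4*r^2) * hs2
      have h2 : 0 < R^2 + 2*r*s := by positivity
      nlinarith [sq_nonneg (R^2 - 2*r^2)]
    rw [le_div_iff₀ (by positivity)]
    nlinarith [Real.pi_pos, sq_nonneg Real.pi]
  · constructor
    · intro h
      rw [div_eq_iff (ne_of_gt (mul_pos hr hs))] at h
      have hR2 : R^2 = 2*r^2 := by
        have hpi : (0:ℝ) < Real.pi ^ 2 := by positivity
        have h' : R^2 = 2*(r*s) := by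
          have := h
          nlinarith [hpi]
        have h1 : (R^2 - 2*r*s) * (R^2 + 2*r*s) = (R^2 - 2*r^2)^2 := by
          linear_combination (-4*r^2) * hs2
        nlinarith [sq_nonneg (R^2 - 2*r^2)]
      have : R = Real.sqrt (2*r^2) := by
        rw [← hR2, Real.sqrt_sq hR.le]
      rw [this, Real.sqrt_mul (by norm_num), Real.sqrt_sq hr.le]
    · intro h
      have hR2 : R^2 = 2*r^2 := by
        rw [h]; rw [mul_pow, Real.sq_sqrt (by norm_num)]
      have hsv : s = r := by
        rw [hs_def, hR2]
        rw [show 2*r^2 - r^2 = r^2 by ring, Real.sqrt_sq hr.le]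
      rw [hsv, hR2]
      field_simp
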